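/- arXiv:1907.03053 — 3 statements merged into one kernel-verified Lean document; each statement's English description precedes it below -/
import Mathlib

section
/- Let C^1, …, C^K ∈ ℝ^{N×N} be matrices such that for every k the spectral norm of (C^k)ᵀ (I_N − (1/N)·1_N 1_Nᵀ) C^k is strictly less than one. Then the spectral norm of C̄ᵀ · ((I_N − (1/N)·1_N 1_Nᵀ) ⊗ I_K) · C̄ is strictly less than one, where C̄ = Σ_{k=1}^K C^k ⊗ (e_k e_kᵀ). -/
open Matrix
open scoped Kronecker

/-- `C̄ = Σ_k C^k ⊗ (e_k e_kᵀ)`, indexed by pairs `(i,k)` via Kronecker indexing. -/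
noncomputable def Cbar {N K : ℕ} (C : Fin K → Matrix (Fin N) (Fin N) ℝ) :
    Matrix (Fin N × Fin K) (Fin N × Fin K) ℝ :=
  ∑ k : Fin K, (C k) ⊗ₖ (Matrix.single k k (1 : ℝ))

/-- The centering matrix `I_N − (1/N)·1_N 1_Nᵀ`. -/
noncomputable def centering (N : ℕ) : Matrix (Fin N) (Fin N) ℝ :=
  1 - (N : ℝ)⁻¹ • Matrix.of (fun _ _ => (1 : ℝ))

/-- The spectral norm (ℓ²→ℓ² operator norm) of a square real matrix. -/
noncomputable def matSpectralNorm {n : Type*} [Fintype n] [DecidableEq n]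
    (A : Matrix n n ℝ) : ℝ :=
  ‖Matrix.toEuclideanCLM (𝕜 := ℝ) A‖

lemma sq_sum_norm_eq {n : Type*} [Fintype n] (w : n → ℝ) :
    ‖(WithLp.equiv 2 (n → ℝ)).symm w‖ ^ 2 = ∑ i, (w i) ^ 2 := by
  rw [EuclideanSpace.norm_eq, Real.sq_sqrt (by positivity)]
  simp [Real.norm_eq_abs, sq_abs]

lemma matSpectralNorm_nonneg {n : Type*} [Fintype n] [DecidableEq n] (A : Matrix n n ℝ) :
    0 ≤ matSpectralNorm A := norm_nonneg _

lemma mulVec_sq_sum_le {n : Type*} [Fintype n] [DecidableEq n] (A : Matrix n n ℝ) (v : n → ℝ) :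
    ∑ i, (A.mulVec v i) ^ 2 ≤ (matSpectralNorm A) ^ 2 * ∑ i, (v i) ^ 2 := by
  have h1 : Matrix.toEuclideanCLM (𝕜 := ℝ) A ((WithLp.equiv 2 (n → ℝ)).symm v)
      = (WithLp.equiv 2 (n → ℝ)).symm (A.mulVec v) := by
    rfl
  calc ∑ i, (A.mulVec v i) ^ 2
      = ‖Matrix.toEuclideanCLM (𝕜 := ℝ) A ((WithLp.equiv 2 (n → ℝ)).symm v)‖ ^ 2 := by
        rw [h1, sq_sum_norm_eq]
    _ ≤ (matSpectralNorm A * ‖(WithLp.equiv 2 (n → ℝ)).symm v‖) ^ 2 := by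
        apply pow_le_pow_left₀ (norm_nonneg _) (ContinuousLinearMap.le_opNorm _ _)
    _ = (matSpectralNorm A) ^ 2 * ∑ i, (v i) ^ 2 := by rw [mul_pow, sq_sum_norm_eq]

lemma stdT {K : ℕ} (k : Fin K) :
    (Matrix.single k k (1 : ℝ))ᵀ = Matrix.single k k 1 := by
  ext a b; simp [Matrix.single, and_comm]

lemma std_mul_std {K : ℕ} {m k : Fin K} (hm : m ≠ k) :
    Matrix.single m m (1 : ℝ) * Matrix.single k k 1 = 0 := by
  ext a b
  simp only [Matrix.mul_apply, Matrix.single, Matrix.of_apply, Matrix.zero_apply,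
    ite_mul, one_mul, zero_mul, ← ite_and]
  refine Finset.sum_eq_zero fun x _ => if_neg fun hx => hm (hx.1.2.trans hx.2.1.symm)

lemma cbar_sandwich {N K : ℕ} (C : Fin K → Matrix (Fin N) (Fin N) ℝ)
    (P : Matrix (Fin N) (Fin N) ℝ) :
    (Cbar C)ᵀ * (P ⊗ₖ (1 : Matrix (Fin K) (Fin K) ℝ)) * (Cbar C)
      = ∑ k : Fin K, ((C k)ᵀ * P * C k) ⊗ₖ Matrix.single k k (1 : ℝ) := by
  unfold Cbar
  rw [Matrix.transpose_sum, Finset.sum_mul, Finset.sum_mul]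
  rw [Finset.sum_congr rfl (fun m _ => Finset.mul_sum (Finset.univ) _ _)]
  rw [Finset.sum_comm]
  refine Finset.sum_congr rfl (fun k _ => ?_)
  rw [Finset.sum_eq_single k]
  · rw [← Matrix.kroneckerMap_transpose, ← Matrix.mul_kronecker_mul, ← Matrix.mul_kronecker_mul,
      stdT, Matrix.mul_one, Matrix.single_mul_single_same, mul_one]
  · intro m _ hm
    rw [← Matrix.kroneckerMap_transpose, ← Matrix.mul_kronecker_mul, ← Matrix.mul_kronecker_mul]
    have h0 : (Matrix.single m m (1:ℝ))ᵀ * 1 * Matrix.single k k (1:ℝ) = 0 := by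
      rw [Matrix.mul_one, stdT, std_mul_std hm]
    rw [h0, Matrix.kroneckerMap_zero_right _ (fun a => by simp)]
  · simp

lemma sandwich_apply {N K : ℕ} (C : Fin K → Matrix (Fin N) (Fin N) ℝ)
    (P : Matrix (Fin N) (Fin N) ℝ) (i j : Fin N) (k l : Fin K) :
    ((Cbar C)ᵀ * (P ⊗ₖ (1 : Matrix (Fin K) (Fin K) ℝ)) * (Cbar C)) (i, k) (j, l)
      = if k = l then ((C k)ᵀ * P * C k) i j else 0 := by
  rw [cbar_sandwich, Matrix.sum_apply]
  simp only [Matrix.kroneckerMap_apply, Matrix.single, Matrix.of_apply]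
  by_cases hkl : k = l
  · subst hkl
    rw [Finset.sum_eq_single k] <;> simp +contextual [eq_comm]
  · refine (Finset.sum_eq_zero fun m _ => ?_).trans (by simp [hkl])
    rcases eq_or_ne m k with rfl | hmk
    · simp [hkl]
    · simp [hmk]

/-- if `‖(C^k)ᵀ (I − (1/N)1 1ᵀ) C^k‖ < 1` for every `k`, then
`‖C̄ᵀ ((I − (1/N)1 1ᵀ) ⊗ I_K) C̄‖ < 1`. -/
theorem spectralNorm_cbar_lt_one {N K : ℕ} (hN : 0 < N) (hK : 0 < K)
    (C : Fin K → Matrix (Fin N) (Fin N) ℝ)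
    (h : ∀ k, matSpectralNorm ((C k)ᵀ * centering N * C k) < 1) :
    matSpectralNorm ((Cbar C)ᵀ * ((centering N) ⊗ₖ (1 : Matrix (Fin K) (Fin K) ℝ)) * (Cbar C))
      < 1 := by
  haveI : NeZero K := ⟨hK.ne'⟩
  set P := centering N with hP
  set A : Fin K → Matrix (Fin N) (Fin N) ℝ := fun k => (C k)ᵀ * P * C k with hA
  set M := (Cbar C)ᵀ * (P ⊗ₖ (1 : Matrix (Fin K) (Fin K) ℝ)) * (Cbar C) with hMdef
  have hne : (Finset.univ : Finset (Fin K)).Nonempty := Finset.univ_nonempty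
  set c : ℝ := Finset.univ.sup' hne (fun k => matSpectralNorm (A k)) with hc
  have hck : ∀ k, matSpectralNorm (A k) ≤ c := fun k =>
    Finset.le_sup' (f := fun k => matSpectralNorm (A k)) (Finset.mem_univ k)
  have hc0 : 0 ≤ c := le_trans (matSpectralNorm_nonneg _) (hck ⟨0, hK⟩)
  have hc1 : c < 1 := (Finset.sup'_lt_iff hne).2 fun k _ => h k
  have key : ∀ (v : (Fin N × Fin K) → ℝ) (i : Fin N) (k : Fin K),
      M.mulVec v (i, k) = (A k).mulVec (fun j => v (j, k)) i := by
    intro v i k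
    simp only [Matrix.mulVec, dotProduct]
    rw [Fintype.sum_prod_type]
    refine Finset.sum_congr rfl (fun j _ => ?_)
    rw [Finset.sum_eq_single k]
    · rw [hMdef, sandwich_apply]; simp [hA]
    · intro l _ hl
      rw [hMdef, sandwich_apply]; simp [hl.symm]
    · simp
  have hsum : ∀ v : (Fin N × Fin K) → ℝ,
      ∑ p : Fin N × Fin K, (M.mulVec v p) ^ 2 ≤ c ^ 2 * ∑ p : Fin N × Fin K, (v p) ^ 2 := by
    intro v
    rw [Fintype.sum_prod_type_right, Fintype.sum_prod_type_right, Finset.mul_sum]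
    refine Finset.sum_le_sum (fun k _ => ?_)
    calc ∑ i, (M.mulVec v (i, k)) ^ 2
        = ∑ i, ((A k).mulVec (fun j => v (j, k)) i) ^ 2 := by
          refine Finset.sum_congr rfl fun i _ => by rw [key]
      _ ≤ (matSpectralNorm (A k)) ^ 2 * ∑ j, (v (j, k)) ^ 2 := mulVec_sq_sum_le _ _
      _ ≤ c ^ 2 * ∑ j, (v (j, k)) ^ 2 := by
          apply mul_le_mul_of_nonneg_right (pow_le_pow_left₀ (matSpectralNorm_nonneg _) (hck k) 2)
          positivity
  have hle : matSpectralNorm M ≤ c := by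
    apply ContinuousLinearMap.opNorm_le_bound _ hc0
    intro x
    have hx2 : ‖(Matrix.toEuclideanCLM (𝕜 := ℝ) M) x‖ ^ 2 ≤ (c * ‖x‖) ^ 2 := by
      set v : (Fin N × Fin K) → ℝ := WithLp.equiv 2 _ x with hv
      have hxv : x = (WithLp.equiv 2 ((Fin N × Fin K) → ℝ)).symm v := rfl
      rw [hxv, show Matrix.toEuclideanCLM (𝕜 := ℝ) M ((WithLp.equiv 2 _).symm v)
          = (WithLp.equiv 2 ((Fin N × Fin K) → ℝ)).symm (M.mulVec v) from rfl,
        sq_sum_norm_eq, mul_pow, sq_sum_norm_eq]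
      exact hsum v
    nlinarith [norm_nonneg ((Matrix.toEuclideanCLM (𝕜 := ℝ) M) x), norm_nonneg x,
      mul_nonneg hc0 (norm_nonneg x), hx2]
  exact lt_of_le_of_lt hle hc1
end

section
/- Let (Ω, F, ℙ) be a probability space and let C^1, …, C^K : Ω → ℝ^{N×N} be random matrices such that each random matrix (C^k)ᵀ (I_N − (1/N)·1_N 1_Nᵀ) C^k is integrable and the spectral norm of its expectation 𝔼[(C^k)ᵀ (I_N − (1/N)·1_N 1_Nᵀ) C^k] is strictly less than one for every k ∈ {1,…,K}. Then the spectral norm of 𝔼[C̄ᵀ · ((I_N − (1/N)·1_N 1_Nᵀ) ⊗ I_K) · C̄] is strictly less than one, where C̄(ω) = Σ_{k=1}^K C^k(ω) ⊗ (e_k e_kᵀ). -/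
open Matrix MeasureTheory
open scoped Kronecker

lemma euclid_apply {n : Type*} [Fintype n] [DecidableEq n] (A : Matrix n n ℝ)
    (x : EuclideanSpace ℝ n) (i : n) :
    (Matrix.toEuclideanCLM (𝕜 := ℝ) A x) i = ∑ j, A i j * x j := rfl

lemma spectralNorm_blockDiag_le {n κ : Type*} [Fintype n] [DecidableEq n]
    [Fintype κ] [DecidableEq κ] (B : κ → Matrix n n ℝ) {c : ℝ} (hc : 0 ≤ c)
    (hB : ∀ k, matSpectralNorm (B k) ≤ c) (M : Matrix (n × κ) (n × κ) ℝ)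
    (hM : ∀ i k j l, M (i, k) (j, l) = if k = l then B k i j else 0) :
    matSpectralNorm M ≤ c := by
  refine ContinuousLinearMap.opNorm_le_bound _ hc fun x => ?_
  set y : κ → EuclideanSpace ℝ n := fun k => (WithLp.equiv 2 (n → ℝ)).symm fun j => x (j, k)
  have hy : ∀ k j, y k j = x (j, k) := fun _ _ => rfl
  have key : ∀ p : n × κ, (Matrix.toEuclideanCLM (𝕜 := ℝ) M x) p
      = (Matrix.toEuclideanCLM (𝕜 := ℝ) (B p.2) (y p.2)) p.1 := by
    rintro ⟨i, k⟩
    rw [euclid_apply, euclid_apply]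
    rw [Fintype.sum_prod_type]
    rw [Finset.sum_comm]
    simp only [hM, hy, ite_mul, zero_mul]
    simp [Finset.sum_ite_eq]
  have hxsq : ‖x‖ ^ 2 = ∑ k, ‖y k‖ ^ 2 := by
    simp only [EuclideanSpace.norm_eq]
    rw [Real.sq_sqrt (by positivity)]
    rw [show (∑ k, Real.sqrt (∑ j, ‖y k j‖ ^ 2) ^ 2) = ∑ k, ∑ j, ‖y k j‖ ^ 2 by
      refine Finset.sum_congr rfl fun k _ => Real.sq_sqrt (by positivity)]
    rw [Fintype.sum_prod_type, Finset.sum_comm]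
    simp [hy]
  have hMx : ‖Matrix.toEuclideanCLM (𝕜 := ℝ) M x‖ ^ 2
      = ∑ k, ‖Matrix.toEuclideanCLM (𝕜 := ℝ) (B k) (y k)‖ ^ 2 := by
    rw [EuclideanSpace.norm_eq, Real.sq_sqrt (by positivity)]
    simp only [EuclideanSpace.norm_eq]
    rw [show (∑ k, Real.sqrt (∑ i, ‖(Matrix.toEuclideanCLM (𝕜 := ℝ) (B k) (y k)) i‖ ^ 2) ^ 2)
        = ∑ k, ∑ i, ‖(Matrix.toEuclideanCLM (𝕜 := ℝ) (B k) (y k)) i‖ ^ 2 by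
      refine Finset.sum_congr rfl fun k _ => Real.sq_sqrt (by positivity)]
    rw [Fintype.sum_prod_type, Finset.sum_comm]
    simp [key]
  have hb : ∀ k, ‖Matrix.toEuclideanCLM (𝕜 := ℝ) (B k) (y k)‖ ^ 2 ≤ c ^ 2 * ‖y k‖ ^ 2 := by
    intro k
    have h1 : ‖Matrix.toEuclideanCLM (𝕜 := ℝ) (B k) (y k)‖ ≤ c * ‖y k‖ :=
      le_trans ((Matrix.toEuclideanCLM (𝕜 := ℝ) (B k)).le_opNorm (y k))
        (by exact mul_le_mul_of_nonneg_right (hB k) (norm_nonneg _))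
    calc ‖Matrix.toEuclideanCLM (𝕜 := ℝ) (B k) (y k)‖ ^ 2 ≤ (c * ‖y k‖) ^ 2 := by
          exact pow_le_pow_left₀ (norm_nonneg _) h1 2
      _ = c ^ 2 * ‖y k‖ ^ 2 := by ring
  have hsq : ‖Matrix.toEuclideanCLM (𝕜 := ℝ) M x‖ ^ 2 ≤ (c * ‖x‖) ^ 2 := by
    rw [hMx]
    calc (∑ k, ‖Matrix.toEuclideanCLM (𝕜 := ℝ) (B k) (y k)‖ ^ 2)
        ≤ ∑ k, c ^ 2 * ‖y k‖ ^ 2 := Finset.sum_le_sum fun k _ => hb k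
      _ = c ^ 2 * ∑ k, ‖y k‖ ^ 2 := by rw [Finset.mul_sum]
      _ = (c * ‖x‖) ^ 2 := by rw [← hxsq]; ring
  exact (pow_le_pow_iff_left₀ (norm_nonneg _) (by positivity) two_ne_zero).mp hsq

lemma cbar_apply {N K : ℕ} (C : Fin K → Matrix (Fin N) (Fin N) ℝ)
    (a i : Fin N) (b k : Fin K) :
    Cbar C (a, b) (i, k) = if b = k then C k a i else 0 := by
  simp only [Cbar, Finset.sum_apply, Matrix.sum_apply, Matrix.kroneckerMap_apply,
    Matrix.single, Matrix.of_apply]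
  by_cases h : b = k
  · subst h
    rw [Finset.sum_eq_single b] <;> simp +contextual
  · rw [Finset.sum_eq_zero, if_neg h]
    intro m _
    by_cases hm : m = b <;> by_cases hk : m = k <;> simp [hm, hk] <;> intro he <;>
      exact absurd he (by tauto)

lemma cbar_quad {N K : ℕ} (P : Matrix (Fin N) (Fin N) ℝ)
    (C : Fin K → Matrix (Fin N) (Fin N) ℝ) (i j : Fin N) (k l : Fin K) :
    ((Cbar C)ᵀ * (P ⊗ₖ (1 : Matrix (Fin K) (Fin K) ℝ)) * (Cbar C)) (i, k) (j, l)
      = if k = l then ((C k)ᵀ * P * (C k)) i j else 0 := by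
  simp only [Matrix.mul_apply, Matrix.transpose_apply, Matrix.kroneckerMap_apply,
    Matrix.one_apply]
  rw [Fintype.sum_prod_type]
  simp only [cbar_apply, Fintype.sum_prod_type]
  simp only [ite_mul, zero_mul, mul_ite, mul_zero, mul_one]
  by_cases h : k = l
  · subst h
    simp [Finset.sum_ite_eq, Finset.mul_sum, Finset.sum_ite_eq', eq_comm]
  · simp [Finset.sum_ite_eq, Finset.sum_ite_eq', h, eq_comm]

/-- if each random matrix `(C^k)ᵀ (I − (1/N)1 1ᵀ) C^k` is entrywise integrable
and the spectral norm of its entrywise expectation is `< 1` for every `k`, then the spectral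
norm of `𝔼[C̄ᵀ ((I − (1/N)1 1ᵀ) ⊗ I_K) C̄]` is `< 1`. -/
theorem spectralNorm_expectation_cbar_lt_one {N K : ℕ} (hN : 0 < N) (hK : 0 < K)
    {Ω : Type*} [MeasureSpace Ω] [IsProbabilityMeasure (volume : Measure Ω)]
    (C : Fin K → Ω → Matrix (Fin N) (Fin N) ℝ)
    (hint : ∀ k i j, Integrable (fun ω => ((C k ω)ᵀ * centering N * (C k ω)) i j))
    (h : ∀ k, matSpectralNorm
        (Matrix.of fun i j => ∫ ω, ((C k ω)ᵀ * centering N * (C k ω)) i j) < 1) :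
    matSpectralNorm (Matrix.of fun p q =>
        ∫ ω, ((Cbar fun k => C k ω)ᵀ * ((centering N) ⊗ₖ (1 : Matrix (Fin K) (Fin K) ℝ)) *
          (Cbar fun k => C k ω)) p q) < 1 := by
  have : Nonempty (Fin K) := ⟨⟨0, hK⟩⟩
  set Mk : Fin K → Matrix (Fin N) (Fin N) ℝ :=
    fun k => Matrix.of fun i j => ∫ ω, ((C k ω)ᵀ * centering N * (C k ω)) i j with hMk
  set c : ℝ := Finset.univ.sup' Finset.univ_nonempty fun k => matSpectralNorm (Mk k) with hcdef
  have hc0 : 0 ≤ c := le_trans (norm_nonneg _)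
    (Finset.le_sup' (f := fun k => matSpectralNorm (Mk k)) (Finset.mem_univ (Classical.arbitrary _)))
  have hle : matSpectralNorm (Matrix.of fun p q =>
      ∫ ω, ((Cbar fun k => C k ω)ᵀ * ((centering N) ⊗ₖ (1 : Matrix (Fin K) (Fin K) ℝ)) *
        (Cbar fun k => C k ω)) p q) ≤ c := by
    refine spectralNorm_blockDiag_le Mk hc0
      (fun k => Finset.le_sup' (f := fun k => matSpectralNorm (Mk k)) (Finset.mem_univ k)) _ ?_
    intro i k j l
    simp only [Matrix.of_apply]
    rw [show (fun ω => ((Cbar fun k => C k ω)ᵀ *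
        ((centering N) ⊗ₖ (1 : Matrix (Fin K) (Fin K) ℝ)) * (Cbar fun k => C k ω)) (i, k) (j, l))
        = fun ω => if k = l then ((C k ω)ᵀ * centering N * (C k ω)) i j else 0 from
      funext fun ω => cbar_quad (centering N) (fun k => C k ω) i j k l]
    by_cases hkl : k = l
    · simp [hkl, hMk]
    · simp [hkl]
  refine lt_of_le_of_lt hle ?_
  rw [hcdef, Finset.sup'_lt_iff]
  exact fun k _ => h k
end

section
/- Let B ∈ ℝ^{N×N} be a nonnegative column stochastic matrix with strictly positive diagonal entries (B(i,i) > 0 for all i), and suppose B is irreducible, i.e., for every pair (i,j) there exists m ≥ 1 such that (B^m)(i,j) > 0. Then there exists a constant α > 0 such that (B^t 1_N)(i) ≥ α for every t ≥ 0 and every i ∈ {1,…,N}. -/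
open Matrix

lemma ps_pow_nonneg {N : ℕ} (B : Matrix (Fin N) (Fin N) ℝ)
    (hnn : ∀ i j, 0 ≤ B i j) : ∀ t i j, 0 ≤ (B ^ t) i j := by
  intro t
  induction t with
  | zero =>
    intro i j
    simp only [pow_zero, Matrix.one_apply]
    split <;> norm_num
  | succ t ih =>
    intro i j
    rw [pow_succ, Matrix.mul_apply]
    exact Finset.sum_nonneg fun k _ => mul_nonneg (ih i k) (hnn k j)

lemma ps_pow_colsum {N : ℕ} (B : Matrix (Fin N) (Fin N) ℝ)
    (hcol : ∀ j, ∑ i, B i j = 1) : ∀ t j, ∑ i, (B ^ t) i j = 1 := by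
  intro t
  induction t with
  | zero =>
    intro j
    simp [Matrix.one_apply]
  | succ t ih =>
    intro j
    simp only [pow_succ, Matrix.mul_apply]
    rw [Finset.sum_comm]
    have : ∀ k ∈ Finset.univ, ∑ i : Fin N, (B ^ t) i k * B k j = B k j := by
      intro k _
      rw [← Finset.sum_mul, ih k, one_mul]
    rw [Finset.sum_congr rfl this, hcol]

lemma ps_pos_mono {N : ℕ} (B : Matrix (Fin N) (Fin N) ℝ)
    (hnn : ∀ i j, 0 ≤ B i j) (hdiag : ∀ i, 0 < B i i) :
    ∀ i j s t, s ≤ t → 0 < (B ^ s) i j → 0 < (B ^ t) i j := by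
  intro i j s t hst hs
  induction t, hst using Nat.le_induction with
  | base => exact hs
  | succ t _ ih =>
    rw [pow_succ', Matrix.mul_apply]
    apply Finset.sum_pos' (fun k _ => mul_nonneg (hnn i k) (ps_pow_nonneg B hnn t k j))
    exact ⟨i, Finset.mem_univ i, mul_pos (hdiag i) ih⟩

/-- let `B` be a nonnegative column stochastic matrix with strictly positive
diagonal which is irreducible (for all `i,j` some power `B^m`, `m ≥ 1`, has a positive
`(i,j)` entry). Then the push-sum weights `y_t = B^t 1_N` are uniformly bounded below by
some constant `α > 0`. -/
theorem pushsum_weights_lower_bound {N : ℕ} (hN : 0 < N)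
    (B : Matrix (Fin N) (Fin N) ℝ)
    (hnn : ∀ i j, 0 ≤ B i j)
    (hcol : ∀ j, ∑ i, B i j = 1)
    (hdiag : ∀ i, 0 < B i i)
    (hirr : ∀ i j, ∃ m : ℕ, 1 ≤ m ∧ 0 < (B ^ m) i j) :
    ∃ α : ℝ, 0 < α ∧ ∀ (t : ℕ) (i : Fin N), α ≤ ((B ^ t) *ᵥ (fun _ => (1 : ℝ))) i := by
  haveI : Nonempty (Fin N) := ⟨⟨0, hN⟩⟩
  choose m hm1 hm2 using hirr
  -- a single power M with all entries positive
  set M : ℕ := Finset.univ.sup (fun p : Fin N × Fin N => m p.1 p.2) with hM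
  have hMpos : ∀ i j, 0 < (B ^ M) i j := by
    intro i j
    refine ps_pos_mono B hnn hdiag i j (m i j) M ?_ (hm2 i j)
    exact Finset.le_sup (f := fun p : Fin N × Fin N => m p.1 p.2) (Finset.mem_univ (i, j))
  -- ε = min entry of B^M
  obtain ⟨p, -, hp⟩ := Finset.exists_min_image (Finset.univ : Finset (Fin N × Fin N))
    (fun p => (B ^ M) p.1 p.2) ⟨(⟨⟨0, hN⟩, ⟨0, hN⟩⟩ : Fin N × Fin N), Finset.mem_univ _⟩
  set ε : ℝ := (B ^ M) p.1 p.2 with hε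
  have hεpos : 0 < ε := hMpos p.1 p.2
  have hεle : ∀ i j, ε ≤ (B ^ M) i j := fun i j => hp (i, j) (Finset.mem_univ _)
  -- d = min diagonal
  obtain ⟨i0, -, hi0⟩ := Finset.exists_min_image (Finset.univ : Finset (Fin N))
    (fun i => B i i) ⟨⟨0, hN⟩, Finset.mem_univ _⟩
  set d : ℝ := B i0 i0 with hd
  have hdpos : 0 < d := hdiag i0
  have hdle1 : d ≤ 1 := by
    have := hcol i0
    calc d = B i0 i0 := rfl
      _ ≤ ∑ i, B i i0 := Finset.single_le_sum (fun k _ => hnn k i0) (Finset.mem_univ i0)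
      _ = 1 := hcol i0
  have hdlediag : ∀ i, d ≤ B i i := fun i => hi0 i (Finset.mem_univ i)
  -- diagonal lower bound: (B^t) i i ≥ d^t
  have hdiagpow : ∀ t i, d ^ t ≤ (B ^ t) i i := by
    intro t
    induction t with
    | zero => intro i; simp [Matrix.one_apply]
    | succ t ih =>
      intro i
      rw [pow_succ B t, Matrix.mul_apply]
      calc d ^ (t + 1) = d ^ t * d := by ring
        _ ≤ (B ^ t) i i * B i i := by
            apply mul_le_mul (ih i) (hdlediag i) (le_of_lt hdpos)
            exact ps_pow_nonneg B hnn t i i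
        _ ≤ ∑ k, (B ^ t) i k * B k i := by
            apply Finset.single_le_sum (f := fun k => (B ^ t) i k * B k i)
              (fun k _ => mul_nonneg (ps_pow_nonneg B hnn t i k) (hnn k i))
              (Finset.mem_univ i)
  -- y_t i = ∑ j (B^t) i j
  have hy : ∀ t i, ((B ^ t) *ᵥ (fun _ => (1 : ℝ))) i = ∑ j, (B ^ t) i j := by
    intro t i
    simp [Matrix.mulVec, dotProduct]
  refine ⟨min (ε * N) (d ^ M), lt_min (mul_pos hεpos (by exact_mod_cast hN)) (pow_pos hdpos M), ?_⟩
  intro t i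
  rw [hy]
  rcases le_or_gt M t with htM | htM
  · -- t ≥ M : y_t i ≥ ε * N
    refine le_trans (min_le_left _ _) ?_
    obtain ⟨s, rfl⟩ := Nat.exists_eq_add_of_le htM
    have hsplit : (B : Matrix (Fin N) (Fin N) ℝ) ^ (M + s) = B ^ M * B ^ s := pow_add B M s
    rw [hsplit]
    have : ∑ j, (B ^ M * B ^ s) i j = ∑ j, ∑ k, (B ^ M) i k * (B ^ s) k j := by
      simp [Matrix.mul_apply]
    rw [this, Finset.sum_comm]
    have hkey : ∀ k ∈ Finset.univ, ε * (∑ j, (B ^ s) k j) ≤ ∑ j : Fin N, (B ^ M) i k * (B ^ s) k j := by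
      intro k _
      rw [← Finset.mul_sum]
      apply mul_le_mul_of_nonneg_right (hεle i k)
      exact Finset.sum_nonneg fun j _ => ps_pow_nonneg B hnn s k j
    calc ε * (N : ℝ) = ∑ k : Fin N, ε * (∑ j, (B ^ s) k j) := by
          rw [← Finset.mul_sum, Finset.sum_comm (f := fun k j => (B ^ s) k j)]
          have : ∀ j ∈ Finset.univ, ∑ k : Fin N, (B ^ s) k j = 1 := fun j _ =>
            ps_pow_colsum B hcol s j
          rw [Finset.sum_congr rfl this]
          simp
      _ ≤ ∑ k : Fin N, ∑ j : Fin N, (B ^ M) i k * (B ^ s) k j := Finset.sum_le_sum hkey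
  · -- t < M : y_t i ≥ (B^t) i i ≥ d^t ≥ d^M
    refine le_trans (min_le_right _ _) ?_
    have h1 : d ^ M ≤ d ^ t := pow_le_pow_of_le_one (le_of_lt hdpos) hdle1 (le_of_lt htM)
    have h2 : d ^ t ≤ (B ^ t) i i := hdiagpow t i
    have h3 : (B ^ t) i i ≤ ∑ j, (B ^ t) i j :=
      Finset.single_le_sum (fun j _ => ps_pow_nonneg B hnn t i j) (Finset.mem_univ i)
    linarith
end
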